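/- If the entries of μ sum to n > 0 (i.e. μ_{++} = n), then D − n⁻¹ μμᵀ = D(I_I − P^D_𝒟); i.e. the covariance matrix of a multinomially distributed contingency table with expectation vector μ equals D times the D-orthogonal projection onto the D-orthogonal complement of the diagonal space. -/

import Mathlib

open Matrix BigOperators

noncomputable section

/-- Cells `(j,k)` of a `(J+1) × (K+1)` contingency table. -/
abbrev Cell (J K : ℕ) := Fin (J + 1) × Fin (K + 1)

/-- Standard unit vector `e_{jk}` in `ℝ^I`. -/
def eV {J K : ℕ} (c : Cell J K) : Cell J K → ℝ := Pi.single c 1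

/-- Row-sum vector `e_{j+} = Σ_k e_{jk}`. -/
def eRow {J K : ℕ} (j : Fin (J + 1)) : Cell J K → ℝ := ∑ k : Fin (K + 1), eV (j, k)

/-- Column-sum vector `e_{+k} = Σ_j e_{jk}`. -/
def eCol {J K : ℕ} (k : Fin (K + 1)) : Cell J K → ℝ := ∑ j : Fin (J + 1), eV (j, k)

/-- The all-ones vector `e_{++}`. -/
def eAll (J K : ℕ) : Cell J K → ℝ := ∑ j : Fin (J + 1), ∑ k : Fin (K + 1), eV (j, k)

/-- The row space `ℛ = span{e_{0+},…,e_{J+}}`. -/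
def rowSpace (J K : ℕ) : Submodule ℝ (Cell J K → ℝ) :=
  Submodule.span ℝ (Set.range (eRow (J := J) (K := K)))

/-- The column space `𝒞 = span{e_{+0},…,e_{+K}}`. -/
def colSpace (J K : ℕ) : Submodule ℝ (Cell J K → ℝ) :=
  Submodule.span ℝ (Set.range (eCol (J := J) (K := K)))

/-- The diagonal space `𝒟 = span{e_{++}}`. -/
def diagSpace (J K : ℕ) : Submodule ℝ (Cell J K → ℝ) :=
  Submodule.span ℝ {eAll J K}

/-- The marginal space `𝒯 = ℛ + 𝒞`. -/
def margSpace (J K : ℕ) : Submodule ℝ (Cell J K → ℝ) := rowSpace J K ⊔ colSpace J K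

/-- `P` is the `D`-orthogonal projection matrix onto the subspace `S`:
`P x ∈ S` and `x - P x` is `D`-orthogonal to `S`, for every `x`. -/
def IsProjD {J K : ℕ} (D : Matrix (Cell J K) (Cell J K) ℝ) (S : Submodule ℝ (Cell J K → ℝ))
    (P : Matrix (Cell J K) (Cell J K) ℝ) : Prop :=
  ∀ x, P.mulVec x ∈ S ∧ ∀ s ∈ S, (x - P.mulVec x) ⬝ᵥ D.mulVec s = 0

/-- The `D`-orthogonal complement of a subspace `S`. -/
def perpD {J K : ℕ} (D : Matrix (Cell J K) (Cell J K) ℝ) (S : Submodule ℝ (Cell J K → ℝ)) :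
    Submodule ℝ (Cell J K → ℝ) where
  carrier := {x | ∀ t ∈ S, x ⬝ᵥ D.mulVec t = 0}
  add_mem' := by
    intro a b ha hb t ht
    simp only [Set.mem_setOf_eq] at *
    simp [add_dotProduct, ha t ht, hb t ht]
  zero_mem' := by
    intro t ht
    simp
  smul_mem' := by
    intro c a ha t ht
    simp only [Set.mem_setOf_eq] at *
    simp [smul_dotProduct, ha t ht]

/-- The vector `c_{jk} = e_{jk} + e_{00} - e_{j0} - e_{0k}` (for `1 ≤ j`, `1 ≤ k`). -/
def cVec {J K : ℕ} (j : Fin J) (k : Fin K) : Cell J K → ℝ :=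
  eV (j.succ, k.succ) + eV (0, 0) - eV (j.succ, 0) - eV (0, k.succ)

/-- The `I × (JK)` matrix `C` with columns `c_{jk}`. -/
def Cmat (J K : ℕ) : Matrix (Cell J K) (Fin J × Fin K) ℝ :=
  fun i jk => cVec jk.1 jk.2 i

/-- The vector `b_k = e_{0k} - e_{00}` (for `1 ≤ k`). -/
def bVec {J K : ℕ} (k : Fin K) : Cell J K → ℝ :=
  eV ((0 : Fin (J + 1)), k.succ) - eV (0, 0)

/-- The `I × K` matrix `B` with columns `b_k`. -/
def Bmat (J K : ℕ) : Matrix (Cell J K) (Fin K) ℝ :=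
  fun i k => bVec k i

/-- The `I × K` matrix `E` with columns `e_{+1},…,e_{+K}`. -/
def Emat (J K : ℕ) : Matrix (Cell J K) (Fin K) ℝ :=
  fun i k => eCol k.succ i

/-- Column space of a matrix. -/
def colSpan {m n : Type*} [Fintype n] (A : Matrix m n ℝ) : Submodule ℝ (m → ℝ) :=
  Submodule.span ℝ (Set.range fun j => fun i => A i j)

/-- The reduced `(JK) × L` covariate matrix `Z°` with rows `z_{jk}ᵀ`, `j,k ≥ 1`. -/
def Zred {J K : ℕ} {L : Type*} (Z : Matrix (Cell J K) L ℝ) : Matrix (Fin J × Fin K) L ℝ :=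
  fun jk => Z (jk.1.succ, jk.2.succ)

/-- The model space `ℋ = 𝒯 + col(Z)` of the log-linear model
`η_{jk} = α + ρ_j + γ_k + z_{jk}ᵀ θ`. -/
def modelSpace {J K : ℕ} {L : Type*} [Fintype L] (Z : Matrix (Cell J K) L ℝ) :
    Submodule ℝ (Cell J K → ℝ) :=
  margSpace J K ⊔ colSpan Z

end

lemma eAll_eq_one (J K : ℕ) : eAll J K = fun _ => 1 := by
  have h : ∑ j : Fin (J + 1), ∑ k : Fin (K + 1), eV (J := J) (K := K) (j, k)
      = ∑ p : Cell J K, eV p := (Fintype.sum_prod_type _).symm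
  rw [eAll, h]
  have := Finset.univ_sum_single (fun _ : Cell J K => (1 : ℝ))
  simpa [eV] using this

lemma PD_entry {J K : ℕ}
    (μ : Cell J K → ℝ) (n : ℝ) (hn : 0 < n) (hsum : ∑ i, μ i = n)
    (PD : Matrix (Cell J K) (Cell J K) ℝ)
    (hPD : IsProjD (Matrix.diagonal μ) (diagSpace J K) PD) :
    ∀ i j, PD i j = μ j / n := by
  intro i j
  obtain ⟨hmem, horth⟩ := hPD (Pi.single j 1)
  rw [diagSpace, Submodule.mem_span_singleton] at hmem
  obtain ⟨c, hc⟩ := hmem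
  have hall : eAll J K ∈ diagSpace J K := Submodule.mem_span_singleton_self _
  have h0 := horth (eAll J K) hall
  rw [← hc] at h0
  have hPij : PD i j = c := by
    have := congrFun hc i
    simp [eAll_eq_one, Matrix.mulVec_single] at this
    linarith
  rw [hPij]
  have hDone : (Matrix.diagonal μ).mulVec (eAll J K) = μ := by
    funext i
    simp [eAll_eq_one, Matrix.mulVec_diagonal]
  rw [hDone, sub_dotProduct, sub_eq_zero] at h0
  have h1 : (Pi.single j 1 : Cell J K → ℝ) ⬝ᵥ μ = μ j := by
    simp [dotProduct, Pi.single_apply]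
  have h2 : (c • eAll J K) ⬝ᵥ μ = c * n := by
    simp [smul_dotProduct, eAll_eq_one, dotProduct, ← Finset.mul_sum, hsum]
  have hcval : c = μ j / n := by
    rw [h1, h2] at h0
    field_simp at h0 ⊢
    linarith
  exact hcval

/-- if `μ_{++} = n > 0` then `D − n⁻¹ μμᵀ = D(I − P^D_𝒟)`, i.e. the
multinomial covariance matrix equals `D` times the `D`-orthogonal projection onto the
`D`-orthogonal complement of the diagonal space. -/
theorem multinomial_covariance_as_projection
    {J K : ℕ} (hJ : 1 ≤ J) (hK : 1 ≤ K)
    (μ : Cell J K → ℝ) (hμ : ∀ i, 0 < μ i)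
    (n : ℝ) (hn : 0 < n) (hsum : ∑ i, μ i = n)
    (PD : Matrix (Cell J K) (Cell J K) ℝ)
    (hPD : IsProjD (Matrix.diagonal μ) (diagSpace J K) PD) :
    Matrix.diagonal μ - n⁻¹ • Matrix.vecMulVec μ μ = Matrix.diagonal μ * (1 - PD) := by
  ext i j
  have hentry := PD_entry μ n hn hsum PD hPD i j
  simp only [Matrix.sub_apply, Matrix.smul_apply, Matrix.vecMulVec_apply, smul_eq_mul,
    Matrix.mul_apply, Matrix.sub_apply, Matrix.one_apply, Matrix.diagonal_apply]
  rw [Finset.sum_eq_single i]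
  · rw [hentry]
    by_cases h : i = j <;> simp [h] <;> field_simp <;> ring
  · intro b _ hb
    simp [Ne.symm hb]
  · intro h
    simp at h
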